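/- arXiv:1404.4386 — 4 statements merged into one kernel-verified Lean document; each statement's English description precedes it below -/
import Mathlib

section
/- Let p be the Gaussian density on ℝ^d with mean μ and symmetric positive definite covariance matrix Σ, and let h(x) = Hx be linear. For each j ∈ {1,…,s} define φ_j(x) = (Σ Hᵀ e_j) · (x − μ), where e_j is the j-th standard basis vector of ℝ^s. Then: (i) ∇φ_j(x) = Σ Hᵀ e_j for all x (so the gain matrix K = [∇φ_1, …, ∇φ_s] equals Σ Hᵀ); (ii) ∇ · (p ∇φ_j)(x) = −(h_j(x) − (Hμ)_j) p(x) for every x ∈ ℝ^d; and (iii) ∫_{ℝ^d} φ_j(x) p(x) dx = 0. In particular φ_j solves the Euler–Lagrange boundary value problem for the gain function in the linear-Gaussian case. -/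
open MeasureTheory Matrix

/-- In the linear-Gaussian case, `φ_j(x) = (Σ Hᵀ e_j) ⬝ (x - μ)` solves the
Euler–Lagrange boundary value problem for the gain function: its gradient is the
constant `Σ Hᵀ e_j`, it satisfies `∇·(p ∇φ_j) = -(h_j - ĥ_j) p`, and it has zero
mean with respect to the Gaussian density `p`. -/
theorem stmt_0 (d s : ℕ)
    (Sig : Matrix (Fin d) (Fin d) ℝ) (hSym : Sig.IsSymm) (hPD : Sig.PosDef)
    (μ : Fin d → ℝ) (H : Matrix (Fin s) (Fin d) ℝ)
    (p : (Fin d → ℝ) → ℝ)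
    (hp : ∀ x, p x = (2 * Real.pi) ^ (-(d : ℝ) / 2) * Sig.det ^ (-(1 : ℝ) / 2) *
      Real.exp (-((x - μ) ⬝ᵥ (Sig⁻¹).mulVec (x - μ)) / 2))
    (j : Fin s)
    (φ : (Fin d → ℝ) → ℝ)
    (hφ : ∀ x, φ x = ((Sig * Hᵀ).mulVec (Pi.single j 1)) ⬝ᵥ (x - μ)) :
    -- (i) the gradient of φ_j is the constant vector Σ Hᵀ e_j (so K = Σ Hᵀ)
    (∀ x l, fderiv ℝ φ x (Pi.single l 1) = (Sig * Hᵀ) l j) ∧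
    -- (ii) ∇·(p ∇φ_j) = -(h_j - ĥ_j) p pointwise
    (∀ x, (∑ l, fderiv ℝ (fun y => p y * (Sig * Hᵀ) l j) x (Pi.single l 1))
        = -((H.mulVec x j - H.mulVec μ j) * p x)) ∧
    -- (iii) φ_j has zero mean against p
    (∫ x, φ x * p x) = 0 := by
  have hdet : IsUnit Sig.det := isUnit_iff_ne_zero.2 hPD.det_pos.ne'
  set A : Matrix (Fin d) (Fin d) ℝ := Sig⁻¹ with hAdef
  have hAsymm : Aᵀ = A := by
    rw [hAdef, Matrix.transpose_nonsing_inv, hSym.eq]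
  set v : Fin d → ℝ := (Sig * Hᵀ).mulVec (Pi.single j 1) with hvdef
  have hv : ∀ l, v l = (Sig * Hᵀ) l j := by
    intro l
    rw [hvdef, Matrix.mulVec_single_one]
    rfl
  -- key algebraic identity
  have key : ∀ w : Fin d → ℝ, v ⬝ᵥ A.mulVec w = H.mulVec w j := by
    intro w
    rw [Matrix.dotProduct_mulVec]
    have hvm : v ᵥ* A = H j := by
      rw [hvdef, ← Matrix.vecMul_transpose, Matrix.vecMul_vecMul,
        Matrix.transpose_mul, Matrix.transpose_transpose, hSym.eq,
        Matrix.mul_assoc, Matrix.mul_nonsing_inv _ hdet, Matrix.mul_one,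
        Matrix.single_one_vecMul]
      rfl
    rw [hvm]
    rfl
  -- projections
  let pr : Fin d → (Fin d → ℝ) →L[ℝ] ℝ := fun i => ContinuousLinearMap.proj i
  -- gradient of φ
  have hφfun : φ = fun y => ∑ i, v i * (y i - μ i) := by
    funext y
    rw [hφ]
    simp [dotProduct]
  have hφ' : ∀ x : Fin d → ℝ, HasFDerivAt φ (∑ i, v i • pr i) x := by
    intro x
    rw [hφfun]
    exact HasFDerivAt.fun_sum fun i _ =>
      HasFDerivAt.const_mul (𝕜 := ℝ) ((hasFDerivAt_apply i x).sub_const (μ i)) (v i)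
  have hLv : ∀ l, (∑ i, v i • pr i) (Pi.single l 1) = v l := by
    intro l
    simp [pr, Pi.single_apply, mul_ite, Finset.sum_ite_eq']
  refine ⟨?_, ?_, ?_⟩
  · intro x l
    rw [(hφ' x).fderiv, hLv, hv]
  · -- divergence identity
    intro x
    set C : ℝ := (2 * Real.pi) ^ (-(d : ℝ) / 2) * Sig.det ^ (-(1 : ℝ) / 2) with hCdef
    set q : (Fin d → ℝ) → ℝ := fun y => ∑ i, ∑ k, A i k * ((y i - μ i) * (y k - μ k)) with hqdef
    have hq_eq : ∀ y : Fin d → ℝ, (y - μ) ⬝ᵥ A.mulVec (y - μ) = q y := by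
      intro y
      simp only [hqdef, dotProduct, Matrix.mulVec, Pi.sub_apply, Finset.mul_sum]
      exact Finset.sum_congr rfl fun i _ => Finset.sum_congr rfl fun k _ => by ring
    set Dq : (Fin d → ℝ) →L[ℝ] ℝ :=
      ∑ i, ∑ k, A i k • ((x i - μ i) • pr k + (x k - μ k) • pr i) with hDqdef
    have hq' : HasFDerivAt q Dq x := by
      refine HasFDerivAt.fun_sum fun i _ => HasFDerivAt.fun_sum fun k _ => ?_
      exact HasFDerivAt.const_mul (𝕜 := ℝ)
        (((hasFDerivAt_apply i x).sub_const (μ i)).mul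
          ((hasFDerivAt_apply k x).sub_const (μ k))) (A i k)
    have hDql : ∀ l, Dq (Pi.single l 1) = 2 * (A.mulVec (x - μ)) l := by
      intro l
      have h1 : Dq (Pi.single l 1)
          = ∑ i, ∑ k, A i k * ((x i - μ i) * (Pi.single l 1 : Fin d → ℝ) k
              + (x k - μ k) * (Pi.single l 1 : Fin d → ℝ) i) := by
        simp only [hDqdef, ContinuousLinearMap.sum_apply, ContinuousLinearMap.smul_apply,
          ContinuousLinearMap.add_apply, ContinuousLinearMap.proj_apply, pr, smul_eq_mul,
          mul_add]
      rw [h1]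
      have h2 : ∀ i, ∑ k, A i k * ((x i - μ i) * (Pi.single l 1 : Fin d → ℝ) k
              + (x k - μ k) * (Pi.single l 1 : Fin d → ℝ) i)
          = A i l * (x i - μ i)
            + (if i = l then ∑ k, A l k * (x k - μ k) else 0) := by
        intro i
        simp only [Pi.single_apply, mul_ite, mul_one, mul_zero, mul_add, add_zero,
          Finset.sum_add_distrib, Finset.sum_ite_eq', Finset.mem_univ, if_true]
        by_cases hil : i = l <;> simp [hil]
      rw [Finset.sum_congr rfl fun i _ => h2 i, Finset.sum_add_distrib,
        Finset.sum_ite_eq' Finset.univ l, if_pos (Finset.mem_univ l)]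
      have hAl : ∀ i, A i l = A l i := fun i => by
        conv_lhs => rw [← hAsymm]
        rfl
      simp only [Matrix.mulVec, dotProduct, Pi.sub_apply]
      rw [Finset.sum_congr rfl fun i _ => by rw [hAl i]]
      ring
    -- derivative of p
    have hpfun : p = fun y => C * Real.exp (-(q y) / 2) := by
      funext y
      rw [hp y, hq_eq y]
    have hneg : (fun y => -(q y) / 2) = fun y => (-(1/2) : ℝ) * q y := by
      funext y; ring
    have hp' : HasFDerivAt p
        (C • Real.exp (-(q x) / 2) • ((-(1/2) : ℝ) • Dq)) x := by
      rw [hpfun]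
      refine HasFDerivAt.const_mul (𝕜 := ℝ) ?_ C
      have : HasFDerivAt (fun y => -(q y) / 2) ((-(1/2) : ℝ) • Dq) x := by
        rw [hneg]
        exact hq'.const_mul (𝕜 := ℝ) _
      simpa using this.exp
    have hpx : p x = C * Real.exp (-(q x) / 2) := by rw [hpfun]
    have hterm : ∀ l, fderiv ℝ (fun y => p y * (Sig * Hᵀ) l j) x (Pi.single l 1)
        = v l * (-(p x) * (A.mulVec (x - μ)) l) := by
      intro l
      rw [fderiv_mul_const hp'.differentiableAt, hp'.fderiv]
      simp only [ContinuousLinearMap.smul_apply, smul_eq_mul]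
      rw [hDql l, hpx, hv]
      ring
    rw [Finset.sum_congr rfl fun l _ => hterm l]
    have : ∑ l, v l * (-(p x) * (A.mulVec (x - μ)) l)
        = -(p x) * (v ⬝ᵥ A.mulVec (x - μ)) := by
      simp only [dotProduct, Finset.mul_sum]
      exact Finset.sum_congr rfl fun l _ => by ring
    rw [this, key, Matrix.mulVec_sub]
    simp only [Pi.sub_apply]
    ring
  · -- zero mean by symmetry
    have hrefl : ∀ x : Fin d → ℝ, φ ((μ + μ) - x) * p ((μ + μ) - x) = -(φ x * p x) := by
      intro x
      have harg : (μ + μ) - x - μ = -(x - μ) := by abel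
      have hφx : φ ((μ + μ) - x) = -(φ x) := by
        rw [hφ, hφ, harg, dotProduct_neg]
      have hpx : p ((μ + μ) - x) = p x := by
        simp only [hp, harg, Matrix.mulVec_neg, neg_dotProduct,
          dotProduct_neg, neg_neg]
      rw [hφx, hpx]
      ring
    have hint := integral_sub_left_eq_self (fun x => φ x * p x) volume (μ + μ)
    simp only [hrefl] at hint
    rw [integral_neg] at hint
    linarith
end

section
/- Let p be a Borel probability measure on ℝ^d with finite second moment, h_j : ℝ^d → ℝ bounded measurable with mean ĥ_j = ∫ h_j dp, and let φ be a weak solution of the gain equation. Then the function c ↦ ∫ |∇φ(x) − c|² dp(x) over constant vectors c ∈ ℝ^d attains its minimum at the unique point c* = ∫ (h_j(x) − ĥ_j) x dp(x); i.e., the constant gain approximation is the best constant approximation, in the least-squares sense over p, of the exact gain function ∇φ. -/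
open MeasureTheory

/-- If `φ` is a weak solution of the gain equation, then the least-squares problem
`min_{c ∈ ℝ^d} ∫ |∇φ(x) - c|² dp(x)` over constant vectors attains its minimum at
the unique point `c* = ∫ (h_j(x) - ĥ_j) x dp(x)`: the constant gain approximation
is the best constant approximation of the exact gain `∇φ`. -/
theorem stmt_3 (d : ℕ) (p : Measure (Fin d → ℝ)) [IsProbabilityMeasure p]
    (hmom : Integrable (fun x : Fin d → ℝ => ‖x‖ ^ 2) p)
    (h : (Fin d → ℝ) → ℝ) (hmeas : Measurable h) (C : ℝ) (hbdd : ∀ x, |h x| ≤ C)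
    (φ : (Fin d → ℝ) → ℝ) (hφ : ContDiff ℝ 1 φ)
    (hgradL2 : Integrable (fun x => ∑ l, (fderiv ℝ φ x (Pi.single l 1)) ^ 2) p)
    (hweak : ∀ ψ : (Fin d → ℝ) → ℝ, ContDiff ℝ 1 ψ →
      Integrable (fun x => (ψ x) ^ 2) p →
      Integrable (fun x => ∑ l, (fderiv ℝ ψ x (Pi.single l 1)) ^ 2) p →
      (∫ x, (∑ l, fderiv ℝ φ x (Pi.single l 1) * fderiv ℝ ψ x (Pi.single l 1)) ∂p)
        = ∫ x, (h x - ∫ y, h y ∂p) * ψ x ∂p)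
    (cstar : Fin d → ℝ)
    (hcstar : cstar = ∫ x, (h x - ∫ y, h y ∂p) • x ∂p) :
    (∀ c : Fin d → ℝ,
        (∫ x, ∑ l, (fderiv ℝ φ x (Pi.single l 1) - cstar l) ^ 2 ∂p)
          ≤ ∫ x, ∑ l, (fderiv ℝ φ x (Pi.single l 1) - c l) ^ 2 ∂p) ∧
    (∀ c : Fin d → ℝ,
        (∫ x, ∑ l, (fderiv ℝ φ x (Pi.single l 1) - c l) ^ 2 ∂p)
          = (∫ x, ∑ l, (fderiv ℝ φ x (Pi.single l 1) - cstar l) ^ 2 ∂p) → c = cstar) := by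
  let g : Fin d → (Fin d → ℝ) → ℝ := fun l x => fderiv ℝ φ x (Pi.single l 1)
  have hhat : |(∫ y, h y ∂p)| ≤ C := by
    calc |(∫ y, h y ∂p)| ≤ ∫ y, |h y| ∂p := by
          simpa [Real.norm_eq_abs] using
            norm_integral_le_integral_norm (μ := p) (f := h)
      _ ≤ ∫ _y, C ∂p :=
          integral_mono_of_nonneg (Filter.Eventually.of_forall fun y => abs_nonneg _)
            (integrable_const C) (Filter.Eventually.of_forall fun y => hbdd y)
      _ = C := by simp
  -- continuity of the gradient components
  have hgc : ∀ l, Continuous (g l) := fun l =>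
    (hφ.continuous_fderiv one_ne_zero).clm_apply continuous_const
  -- integrability of squared components
  have hg2 : ∀ l, Integrable (fun x => g l x ^ 2) p := by
    intro l
    refine hgradL2.mono' ((hgc l).pow 2).aestronglyMeasurable
      (Filter.Eventually.of_forall fun x => ?_)
    rw [Real.norm_eq_abs, abs_of_nonneg (sq_nonneg _)]
    exact Finset.single_le_sum (fun k _ => sq_nonneg (g k x)) (Finset.mem_univ l)
  have hgint : ∀ l, Integrable (g l) p := by
    intro l
    refine ((integrable_const (1:ℝ)).add (hg2 l)).mono' (hgc l).aestronglyMeasurable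
      (Filter.Eventually.of_forall fun x => ?_)
    rw [Real.norm_eq_abs]
    simp only [Pi.add_apply]
    nlinarith [sq_nonneg (|g l x| - 1), sq_abs (g l x)]
  -- integrability of ‖x‖
  have hnormint : Integrable (fun x : Fin d → ℝ => ‖x‖) p := by
    refine ((integrable_const (1:ℝ)).add hmom).mono' continuous_norm.aestronglyMeasurable
      (Filter.Eventually.of_forall fun x => ?_)
    rw [Real.norm_eq_abs, abs_of_nonneg (norm_nonneg _)]
    simp only [Pi.add_apply]
    nlinarith [norm_nonneg x]
  -- integrability of (h x - ĥ) • x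
  have hvint : Integrable (fun x : Fin d → ℝ => (h x - ∫ y, h y ∂p) • x) p := by
    refine (hnormint.const_mul (C + C)).mono'
      (((hmeas.sub measurable_const).smul measurable_id).aestronglyMeasurable)
      (Filter.Eventually.of_forall fun x => ?_)
    rw [norm_smul, Real.norm_eq_abs]
    have hb : |h x - ∫ y, h y ∂p| ≤ C + C :=
      (abs_sub _ _).trans (add_le_add (hbdd x) hhat)
    exact mul_le_mul_of_nonneg_right hb (norm_nonneg x)
  -- the mean of each gradient component is cstar l
  have hmean : ∀ l, ∫ x, g l x ∂p = cstar l := by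
    intro l
    have hψeq : (fun x : Fin d → ℝ => x l)
        = (ContinuousLinearMap.proj (R := ℝ) (φ := fun _ : Fin d => ℝ) l) := rfl
    have hψc : ContDiff ℝ 1 (fun x : Fin d → ℝ => x l) := by
      exact contDiff_pi.mp contDiff_id l
    have hψd : ∀ (x : Fin d → ℝ) k, fderiv ℝ (fun x : Fin d → ℝ => x l) x (Pi.single k 1)
        = Pi.single (M := fun _ : Fin d => ℝ) k 1 l := by
      intro x k
      rw [hψeq, ContinuousLinearMap.fderiv]
      rfl
    have h1 : Integrable (fun x : Fin d → ℝ => (x l) ^ 2) p := by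
      refine hmom.mono' ((continuous_apply l).pow 2).aestronglyMeasurable
        (Filter.Eventually.of_forall fun x => ?_)
      rw [Real.norm_eq_abs, abs_of_nonneg (sq_nonneg _)]
      calc (x l) ^ 2 = |x l| ^ 2 := (sq_abs _).symm
        _ ≤ ‖x‖ ^ 2 := by
            have hle := norm_le_pi_norm x l
            rw [Real.norm_eq_abs] at hle
            nlinarith [abs_nonneg (x l), norm_nonneg x]
    have h2 : Integrable
        (fun x : Fin d → ℝ =>
          ∑ k, (fderiv ℝ (fun x : Fin d → ℝ => x l) x (Pi.single k 1)) ^ 2) p := by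
      have : (fun x : Fin d → ℝ =>
          ∑ k, (fderiv ℝ (fun x : Fin d → ℝ => x l) x (Pi.single k 1)) ^ 2)
          = fun _ => (1 : ℝ) := by
        funext x
        simp [hψd, Pi.single_apply]
      rw [this]; exact integrable_const 1
    have hw := hweak (fun x => x l) hψc h1 h2
    have hL : (fun x => ∑ k, fderiv ℝ φ x (Pi.single k 1)
        * fderiv ℝ (fun x : Fin d → ℝ => x l) x (Pi.single k 1)) = fun x => g l x := by
      funext x
      simp [g, hψd, Pi.single_apply]
    rw [hL] at hw
    rw [hw, hcstar]
    have := (ContinuousLinearMap.proj (R := ℝ) (φ := fun _ : Fin d => ℝ) l).integral_comp_comm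
      hvint
    calc ∫ x, (h x - ∫ y, h y ∂p) * x l ∂p
        = ∫ x, (ContinuousLinearMap.proj (R := ℝ) (φ := fun _ : Fin d => ℝ) l)
            ((h x - ∫ y, h y ∂p) • x) ∂p := rfl
      _ = (∫ x, (h x - ∫ y, h y ∂p) • x ∂p) l := this
  -- integrability of shifted squares
  have hint : ∀ (a : ℝ) l, Integrable (fun x => (g l x - a) ^ 2) p := by
    intro a l
    have : (fun x => (g l x - a) ^ 2)
        = fun x => (g l x ^ 2 - (2 * a) * g l x) + a ^ 2 := by
      funext x; ring
    rw [this]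
    exact ((hg2 l).sub ((hgint l).const_mul (2 * a))).add (integrable_const _)
  -- expansion of each integral
  have expand : ∀ (a : ℝ) l,
      ∫ x, (g l x - a) ^ 2 ∂p = (∫ x, g l x ^ 2 ∂p) - 2 * a * cstar l + a ^ 2 := by
    intro a l
    have heq : (fun x => (g l x - a) ^ 2)
        = fun x => (g l x ^ 2 - (2 * a) * g l x) + a ^ 2 := by
      funext x; ring
    have h1 : Integrable (fun x => g l x ^ 2 - 2 * a * g l x) p := by
      exact (hg2 l).sub ((hgint l).const_mul (2 * a))
    rw [heq, integral_add h1 (integrable_const _),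
      integral_sub (hg2 l) ((hgint l).const_mul (2 * a)), integral_const_mul, hmean l,
      integral_const]
    simp
  -- key formula for the objective
  have key : ∀ c : Fin d → ℝ,
      ∫ x, ∑ l, (g l x - c l) ^ 2 ∂p
        = ∑ l, ((∫ x, g l x ^ 2 ∂p) - 2 * c l * cstar l + c l ^ 2) := by
    intro c
    rw [integral_finset_sum _ fun l _ => hint (c l) l]
    exact Finset.sum_congr rfl fun l _ => expand (c l) l
  have key2 : ∀ c : Fin d → ℝ,
      ∫ x, ∑ l, (g l x - c l) ^ 2 ∂p
        = (∫ x, ∑ l, (g l x - cstar l) ^ 2 ∂p) + ∑ l, (cstar l - c l) ^ 2 := by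
    intro c
    rw [key c, key cstar, ← Finset.sum_add_distrib]
    exact Finset.sum_congr rfl fun l _ => by ring
  constructor
  · intro c
    show (∫ x, ∑ l, (g l x - cstar l) ^ 2 ∂p) ≤ ∫ x, ∑ l, (g l x - c l) ^ 2 ∂p
    rw [key2 c]
    exact le_add_of_nonneg_right (Finset.sum_nonneg fun l _ => sq_nonneg _)
  · intro c hc
    have hc' : (∫ x, ∑ l, (g l x - c l) ^ 2 ∂p)
        = ∫ x, ∑ l, (g l x - cstar l) ^ 2 ∂p := hc
    rw [key2 c] at hc'
    have hzero : ∑ l, (cstar l - c l) ^ 2 = 0 := by linarith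
    funext l
    have := (Finset.sum_eq_zero_iff_of_nonneg fun l _ => sq_nonneg (cstar l - c l)).mp
      hzero l (Finset.mem_univ l)
    have := sq_eq_zero_iff.mp this
    linarith
end

section
/- Let p : ℝ^d → ℝ and K : ℝ^d → ℝ^{d×s} be twice continuously differentiable, let h : ℝ^d → ℝ^s be continuous, let ĥ ∈ ℝ^s be a constant vector, and let β_1, …, β_M ∈ ℝ. Assume the gain identity Σ_{k=1}^d ∂(p K_{kj})/∂x_k = −(h_j − ĥ_j) p holds on ℝ^d for each j ∈ {1,…,s}. Define Ω_l = (1/2) Σ_{k=1}^d Σ_{j=1}^s K_{kj} ∂K_{lj}/∂x_k and u(x) = −Σ_{m=1}^M β_m K(x) [ (β_m/2) h(x) + (1 − β_m/2) ĥ ] + Σ_{m=1}^M β_m² Ω(x). Then on all of ℝ^d, −∇·(p u) + Σ_{m=1}^M β_m² (1/2) Σ_{l,k=1}^d ∂²/∂x_l ∂x_k ( p [K Kᵀ]_{lk} ) = Σ_{m=1}^M β_m [∇·(pK)] ĥ, where [∇·(pK)] ĥ = Σ_{j=1}^s ( Σ_{k=1}^d ∂(p K_{kj})/∂x_k ) ĥ_j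 = −Σ_{j=1}^s (h_j − ĥ_j) ĥ_j p. -/
open MeasureTheory

section aux
variable {E : Type*} [NormedAddCommGroup E] [NormedSpace ℝ E]

lemma aux_contDiff_fderiv_apply {f : E → ℝ} (hf : ContDiff ℝ 2 f) (v : E) :
    ContDiff ℝ 1 fun y => fderiv ℝ f y v :=
  (hf.fderiv_right (by norm_num)).clm_apply contDiff_const

lemma aux_fderiv_sum_apply {ι : Type*} (t : Finset ι) {A : ι → E → ℝ} {x : E}
    (hA : ∀ i ∈ t, DifferentiableAt ℝ (A i) x) (v : E) :
    fderiv ℝ (fun y => ∑ i ∈ t, A i y) x v = ∑ i ∈ t, fderiv ℝ (A i) x v := by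
  rw [fderiv_fun_sum hA]; simp

lemma aux_fderiv_mul_apply {f g : E → ℝ} {x : E} (hf : DifferentiableAt ℝ f x)
    (hg : DifferentiableAt ℝ g x) (v : E) :
    fderiv ℝ (fun y => f y * g y) x v
      = fderiv ℝ f x v * g x + f x * fderiv ℝ g x v := by
  rw [fderiv_fun_mul hf hg]
  simp only [ContinuousLinearMap.add_apply, ContinuousLinearMap.smul_apply, smul_eq_mul]
  ring

lemma aux_fderiv_mul_const_apply {f : E → ℝ} {x : E} (hf : DifferentiableAt ℝ f x)
    (c : ℝ) (v : E) :
    fderiv ℝ (fun y => f y * c) x v = fderiv ℝ f x v * c := by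
  rw [fderiv_mul_const hf c]; simp [mul_comm]

lemma aux_fderiv_const_mul_apply {f : E → ℝ} {x : E} (hf : DifferentiableAt ℝ f x)
    (c : ℝ) (v : E) :
    fderiv ℝ (fun y => c * f y) x v = c * fderiv ℝ f x v := by
  rw [fderiv_const_mul hf c]; simp

lemma aux_fderiv_comb {f g : E → ℝ} {x : E} (hf : DifferentiableAt ℝ f x)
    (hg : DifferentiableAt ℝ g x) (a b : ℝ) (v : E) :
    fderiv ℝ (fun y => a * f y + b * g y) x v
      = a * fderiv ℝ f x v + b * fderiv ℝ g x v := by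
  rw [fderiv_fun_add ((hf.const_mul a)) ((hg.const_mul b)),
    fderiv_const_mul hf a, fderiv_const_mul hg b]
  simp

end aux

/-- Key identity in the consistency proof of PDA-FPF (Theorem 1 of the paper):
assuming the gain identity `∇·(pK)_j = -(h_j - ĥ_j) p`, the drift
`u = -Σ_m β_m K [(β_m/2) h + (1 - β_m/2) ĥ] + Σ_m β_m² Ω` satisfies
`-∇·(pu) + Σ_m β_m² (1/2) Σ_{l,k} ∂²/∂x_l∂x_k (p [K Kᵀ]_lk) = Σ_m β_m [∇·(pK)] ĥ`,
and `[∇·(pK)] ĥ = -Σ_j (h_j - ĥ_j) ĥ_j p`. -/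
theorem stmt_5 (d s M : ℕ)
    (p : (Fin d → ℝ) → ℝ) (hp : ContDiff ℝ 2 p)
    (K : (Fin d → ℝ) → Fin d → Fin s → ℝ)
    (hK : ∀ l j, ContDiff ℝ 2 (fun x => K x l j))
    (h : (Fin d → ℝ) → Fin s → ℝ) (hh : ∀ j, Continuous (fun x => h x j))
    (hhat : Fin s → ℝ) (β : Fin M → ℝ)
    (hgain : ∀ x j, (∑ k, fderiv ℝ (fun y => p y * K y k j) x (Pi.single k 1))
        = -((h x j - hhat j) * p x))
    (Ω : (Fin d → ℝ) → Fin d → ℝ)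
    (hΩ : ∀ x l, Ω x l
      = (1 / 2) * ∑ k, ∑ j, K x k j * fderiv ℝ (fun y => K y l j) x (Pi.single k 1))
    (u : (Fin d → ℝ) → Fin d → ℝ)
    (hu : ∀ x l, u x l
      = -(∑ m, β m * ∑ j, K x l j * ((β m / 2) * h x j + (1 - β m / 2) * hhat j))
        + ∑ m, (β m) ^ 2 * Ω x l) :
    ∀ x,
      ((-(∑ l, fderiv ℝ (fun y => p y * u y l) x (Pi.single l 1))
        + ∑ m, (β m) ^ 2 * ((1 / 2) * ∑ l, ∑ k,
            fderiv ℝ (fun y =>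
              fderiv ℝ (fun w => p w * ∑ j, K w l j * K w k j) y (Pi.single k 1))
              x (Pi.single l 1)))
        = ∑ m, β m * ∑ j,
            (∑ k, fderiv ℝ (fun w => p w * K w k j) x (Pi.single k 1)) * hhat j) ∧
      ((∑ j, (∑ k, fderiv ℝ (fun w => p w * K w k j) x (Pi.single k 1)) * hhat j)
        = -∑ j, (h x j - hhat j) * hhat j * p x) := by
  -- abbreviations
  set F : (Fin d → ℝ) → Fin s → ℝ :=
    fun y j => ∑ k, fderiv ℝ (fun w => p w * K w k j) y (Pi.single k 1) with hFdef
  set W : Fin d → (Fin d → ℝ) → ℝ :=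
    fun l y => (1 / 2) * ∑ k, ∑ j, K y k j * fderiv ℝ (fun w => K w l j) y (Pi.single k 1)
    with hWdef
  set G : Fin d → (Fin d → ℝ) → ℝ :=
    fun l y => (1 / 2) * ∑ j, K y l j * F y j + p y * W l y with hGdef
  -- differentiability facts
  have hdp : Differentiable ℝ p := hp.differentiable two_ne_zero
  have hdK : ∀ l j, Differentiable ℝ (fun y => K y l j) :=
    fun l j => (hK l j).differentiable two_ne_zero
  have hdpK : ∀ k j, Differentiable ℝ (fun y => p y * K y k j) :=
    fun k j => hdp.mul (hdK k j)
  have hdF : ∀ j, Differentiable ℝ (fun y => F y j) := fun j =>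
    (ContDiff.sum fun k (_ : k ∈ Finset.univ) =>
      aux_contDiff_fderiv_apply (hp.mul (hK k j)) (Pi.single k 1)).differentiable one_ne_zero
  have hdW : ∀ l, Differentiable ℝ (fun y => W l y) := fun l =>
    (contDiff_const.mul (ContDiff.sum fun k (_ : k ∈ Finset.univ) =>
        ContDiff.sum fun j (_ : j ∈ Finset.univ) =>
          ((hK k j).of_le one_le_two).mul
            (aux_contDiff_fderiv_apply (hK l j) (Pi.single k 1)))
      : ContDiff ℝ 1 _).differentiable one_ne_zero
  have hdG : ∀ l, Differentiable ℝ (fun y => G l y) := fun l =>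
    (((Differentiable.fun_sum fun j _ => (hdK l j).mul (hdF j)).const_mul (1 / 2)).add
      (hdp.mul (hdW l)))
  have hdS1 : ∀ l, Differentiable ℝ (fun y => ∑ j, p y * K y l j * hhat j) :=
    fun l => Differentiable.fun_sum fun j _ => ((hdp.mul (hdK l j)).mul_const _)
  have hdT : ∀ l k, Differentiable ℝ (fun y =>
      fderiv ℝ (fun w => p w * ∑ j, K w l j * K w k j) y (Pi.single k 1)) :=
    fun l k => (aux_contDiff_fderiv_apply
      (hp.mul (ContDiff.sum fun j _ => (hK l j).mul (hK k j))) _).differentiable one_ne_zero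
  -- consequence of the gain identity
  have hph : ∀ y j, p y * h y j = hhat j * p y - F y j := by
    intro y j
    have hg : F y j = -((h y j - hhat j) * p y) := hgain y j
    linear_combination hg
  intro x
  constructor
  · -- main identity
    -- Step 1: the function p * u_l in closed form
    have hfun : ∀ l, (fun y => p y * u y l)
        = fun y => (-(∑ m, β m)) * (∑ j, p y * K y l j * hhat j)
            + (∑ m, (β m) ^ 2) * G l y := by
      intro l
      funext y
      have hm : ∀ m : Fin M,
          p y * (β m * ∑ j, K y l j * ((β m / 2) * h y j + (1 - β m / 2) * hhat j))
            = β m * (∑ j, p y * K y l j * hhat j)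
              - (β m) ^ 2 * ((1 / 2) * ∑ j, K y l j * F y j) := by
        intro m
        have h1 : p y * ∑ j, K y l j * ((β m / 2) * h y j + (1 - β m / 2) * hhat j)
            = (∑ j, p y * K y l j * hhat j)
              - (β m / 2) * ∑ j, K y l j * F y j := by
          rw [Finset.mul_sum, Finset.mul_sum, ← Finset.sum_sub_distrib]
          refine Finset.sum_congr rfl fun j _ => ?_
          linear_combination (β m / 2 * K y l j) * hph y j
        linear_combination (β m) * h1
      have hΩ' : ∀ l, Ω y l = W l y := fun l => hΩ y l
      calc p y * u y l
          = -(∑ m, p y * (β m * ∑ j, K y l j * ((β m / 2) * h y j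
              + (1 - β m / 2) * hhat j)))
            + ∑ m, (β m) ^ 2 * (p y * W l y) := by
            rw [hu y l]
            rw [mul_add, mul_neg, Finset.mul_sum, Finset.mul_sum]
            congr 1
            exact Finset.sum_congr rfl fun m _ => by rw [hΩ' l]; ring
        _ = -((∑ m, β m) * (∑ j, p y * K y l j * hhat j)
              - (∑ m, (β m) ^ 2) * ((1 / 2) * ∑ j, K y l j * F y j))
            + (∑ m, (β m) ^ 2) * (p y * W l y) := by
            rw [Finset.sum_congr rfl fun m _ => hm m, Finset.sum_sub_distrib,
              ← Finset.sum_mul, ← Finset.sum_mul, ← Finset.sum_mul]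
        _ = (-(∑ m, β m)) * (∑ j, p y * K y l j * hhat j)
            + (∑ m, (β m) ^ 2) * G l y := by
            show _ = _ + (∑ m, (β m) ^ 2)
              * ((1 / 2) * ∑ j, K y l j * F y j + p y * W l y)
            ring
    -- Step 2: divergence term
    have key1 : ∀ l, fderiv ℝ (fun y => p y * u y l) x (Pi.single l 1)
        = (-(∑ m, β m)) * (∑ j, fderiv ℝ (fun y => p y * K y l j) x (Pi.single l 1)
              * hhat j)
          + (∑ m, (β m) ^ 2) * fderiv ℝ (G l) x (Pi.single l 1) := by
      intro l
      rw [hfun l, aux_fderiv_comb ((hdS1 l) x) ((hdG l) x)]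
      congr 2
      rw [aux_fderiv_sum_apply Finset.univ (A := fun j y => p y * K y l j * hhat j)
        (fun j _ => ((hdp.mul (hdK l j)).mul_const (hhat j)) x) (Pi.single l 1)]
      exact Finset.sum_congr rfl fun j _ =>
        aux_fderiv_mul_const_apply ((hdpK l j) x) (hhat j) (Pi.single l 1)
    -- Step 3: second-derivative term
    have key2 : ∀ l, (∑ k, fderiv ℝ (fun y =>
          fderiv ℝ (fun w => p w * ∑ j, K w l j * K w k j) y (Pi.single k 1))
          x (Pi.single l 1))
        = 2 * fderiv ℝ (G l) x (Pi.single l 1) := by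
      intro l
      have hTsum : (fun y => ∑ k, fderiv ℝ (fun w => p w * ∑ j, K w l j * K w k j) y
            (Pi.single k 1)) = fun y => 2 * G l y := by
        funext y
        have hk : ∀ k : Fin d, fderiv ℝ (fun w => p w * ∑ j, K w l j * K w k j) y
              (Pi.single k 1)
            = ∑ j, (fderiv ℝ (fun w => p w * K w k j) y (Pi.single k 1) * K y l j
                + (p y * K y k j) * fderiv ℝ (fun w => K w l j) y (Pi.single k 1)) := by
          intro k
          have hrw : (fun w => p w * ∑ j, K w l j * K w k j)
              = fun w => ∑ j, (p w * K w k j) * K w l j := by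
            funext w
            rw [Finset.mul_sum]
            exact Finset.sum_congr rfl fun j _ => by ring
          rw [hrw, aux_fderiv_sum_apply Finset.univ (A := fun j w => p w * K w k j * K w l j)
            (fun j _ => (((hdpK k j) y).mul ((hdK l j) y))) (Pi.single k 1)]
          exact Finset.sum_congr rfl fun j _ =>
            aux_fderiv_mul_apply ((hdpK k j) y) ((hdK l j) y) (Pi.single k 1)
        rw [Finset.sum_congr rfl fun k _ => hk k]
        have split : ∑ k, ∑ j,
            (fderiv ℝ (fun w => p w * K w k j) y (Pi.single k 1) * K y l j
              + (p y * K y k j) * fderiv ℝ (fun w => K w l j) y (Pi.single k 1))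
            = (∑ j, K y l j * F y j)
              + p y * ∑ k, ∑ j, K y k j * fderiv ℝ (fun w => K w l j) y
                  (Pi.single k 1) := by
          have s1 : ∀ k : Fin d, (∑ j,
              (fderiv ℝ (fun w => p w * K w k j) y (Pi.single k 1) * K y l j
                + (p y * K y k j) * fderiv ℝ (fun w => K w l j) y (Pi.single k 1)))
              = (∑ j, fderiv ℝ (fun w => p w * K w k j) y (Pi.single k 1) * K y l j)
                + ∑ j, (p y * K y k j) * fderiv ℝ (fun w => K w l j) y
                    (Pi.single k 1) := fun k => Finset.sum_add_distrib
          rw [Finset.sum_congr rfl fun k _ => s1 k, Finset.sum_add_distrib]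
          congr 1
          · rw [Finset.sum_comm]
            refine Finset.sum_congr rfl fun j _ => ?_
            rw [Finset.mul_sum]
            exact Finset.sum_congr rfl fun k _ => mul_comm _ _
          · rw [Finset.mul_sum]
            refine Finset.sum_congr rfl fun k _ => ?_
            rw [Finset.mul_sum]
            exact Finset.sum_congr rfl fun j _ => by ring
        rw [split]
        show _ = 2 * ((1 / 2) * ∑ j, K y l j * F y j + p y * W l y)
        show _ = 2 * ((1 / 2) * ∑ j, K y l j * F y j + p y * ((1 / 2) * ∑ k, ∑ j,
          K y k j * fderiv ℝ (fun w => K w l j) y (Pi.single k 1)))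
        ring
      rw [← aux_fderiv_sum_apply Finset.univ (fun k _ => (hdT l k) x) (Pi.single l 1),
        hTsum, aux_fderiv_const_mul_apply ((hdG l) x) 2 (Pi.single l 1)]
    -- Step 4: assemble
    have e1 : (∑ l, fderiv ℝ (fun y => p y * u y l) x (Pi.single l 1))
        = (-(∑ m, β m)) * (∑ l, ∑ j,
              fderiv ℝ (fun y => p y * K y l j) x (Pi.single l 1) * hhat j)
          + (∑ m, (β m) ^ 2) * ∑ l, fderiv ℝ (G l) x (Pi.single l 1) := by
      rw [Finset.sum_congr rfl fun l _ => key1 l, Finset.sum_add_distrib,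
        ← Finset.mul_sum, ← Finset.mul_sum]
    have e2 : (∑ m, (β m) ^ 2 * ((1 / 2) * ∑ l, ∑ k,
          fderiv ℝ (fun y =>
            fderiv ℝ (fun w => p w * ∑ j, K w l j * K w k j) y (Pi.single k 1))
            x (Pi.single l 1)))
        = (∑ m, (β m) ^ 2) * ∑ l, fderiv ℝ (G l) x (Pi.single l 1) := by
      have hS : (∑ l, ∑ k, fderiv ℝ (fun y =>
            fderiv ℝ (fun w => p w * ∑ j, K w l j * K w k j) y (Pi.single k 1))
            x (Pi.single l 1))
          = 2 * ∑ l, fderiv ℝ (G l) x (Pi.single l 1) := by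
        rw [Finset.mul_sum]
        exact Finset.sum_congr rfl fun l _ => key2 l
      rw [hS]
      rw [Finset.sum_congr rfl fun m (_ : m ∈ Finset.univ) =>
        (by ring : (β m) ^ 2 * ((1 / 2) * (2 * ∑ l, fderiv ℝ (G l) x (Pi.single l 1)))
          = (β m) ^ 2 * ∑ l, fderiv ℝ (G l) x (Pi.single l 1))]
      exact (Finset.sum_mul _ _ _).symm
    rw [e1, e2]
    have e3 : (∑ m, β m * ∑ j,
          (∑ k, fderiv ℝ (fun w => p w * K w k j) x (Pi.single k 1)) * hhat j)
        = (∑ m, β m) * ∑ j,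
          (∑ k, fderiv ℝ (fun w => p w * K w k j) x (Pi.single k 1)) * hhat j :=
      (Finset.sum_mul _ _ _).symm
    rw [e3]
    have e4 : (∑ l, ∑ j, fderiv ℝ (fun y => p y * K y l j) x (Pi.single l 1) * hhat j)
        = ∑ j, (∑ k, fderiv ℝ (fun w => p w * K w k j) x (Pi.single k 1)) * hhat j := by
      rw [Finset.sum_comm]
      exact Finset.sum_congr rfl fun j _ => (Finset.sum_mul _ _ _).symm
    rw [e4]
    ring
  · -- second identity
    rw [Finset.sum_congr rfl fun j (_ : j ∈ Finset.univ) => by rw [hgain x j],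
      ← Finset.sum_neg_distrib]
    exact Finset.sum_congr rfl fun j _ => by ring
end

section
/- Under the setup of the association-probability likelihood-ratio functions: for every m, j ∈ {1,…,M}, the second partial derivative of E^m with respect to z_j (twice) at (0,0) equals (1 − β^m) ĥ₂ − 2 β^m (1 − β^m) ĥ² if j = m, and equals 2 (β^j)² ĥ² − β^j ĥ₂ if j ≠ m. -/
open MeasureTheory

private lemma aux_integrable {d : ℕ} (p : Measure (Fin d → ℝ)) [IsProbabilityMeasure p]
    (g : (Fin d → ℝ) → ℝ) (gmeas : Measurable g) (Cg : ℝ) (gbdd : ∀ x, |g x| ≤ Cg) :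
    Integrable g p :=
  (integrable_const Cg).mono' gmeas.aestronglyMeasurable
    (Filter.Eventually.of_forall fun x => by simpa using gbdd x)

private lemma aux_hasDeriv {d : ℕ} (p : Measure (Fin d → ℝ)) [IsProbabilityMeasure p]
    (h g : (Fin d → ℝ) → ℝ) (hmeas : Measurable h) (gmeas : Measurable g)
    (C Cg : ℝ) (hbdd : ∀ x, |h x| ≤ C) (gbdd : ∀ x, |g x| ≤ Cg) (v₀ : ℝ) :
    HasDerivAt (fun v => ∫ x, g x * Real.exp (v * h x) ∂p)
      (∫ x, (g x * h x) * Real.exp (v₀ * h x) ∂p) v₀ := by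
  have hC : 0 ≤ C := (abs_nonneg _).trans (hbdd (fun _ => 0))
  have hCg : 0 ≤ Cg := (abs_nonneg _).trans (gbdd (fun _ => 0))
  have key := hasDerivAt_integral_of_dominated_loc_of_deriv_le (μ := p)
    (F := fun v x => g x * Real.exp (v * h x))
    (F' := fun v x => (g x * h x) * Real.exp (v * h x))
    (x₀ := v₀) (bound := fun _ => Cg * C * Real.exp ((|v₀| + 1) * C))
    (s := Metric.ball v₀ 1) (Metric.ball_mem_nhds v₀ one_pos)
    (Filter.Eventually.of_forall fun v =>
      (gmeas.mul ((measurable_const.mul hmeas).exp)).aestronglyMeasurable)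
    ?_ ((gmeas.mul hmeas).mul ((measurable_const.mul hmeas).exp)).aestronglyMeasurable
    ?_ (integrable_const _) ?_
  · exact key.2
  · refine aux_integrable p _ (gmeas.mul ((measurable_const.mul hmeas).exp))
      (Cg * Real.exp (|v₀| * C)) fun x => ?_
    rw [abs_mul, Real.abs_exp]
    refine mul_le_mul (gbdd x) (Real.exp_le_exp.2 ?_) (Real.exp_pos _).le hCg
    calc v₀ * h x ≤ |v₀ * h x| := le_abs_self _
    _ = |v₀| * |h x| := abs_mul _ _
    _ ≤ |v₀| * C := mul_le_mul_of_nonneg_left (hbdd x) (abs_nonneg _)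
  · refine Filter.Eventually.of_forall fun x v hv => ?_
    rw [Real.norm_eq_abs, abs_mul, abs_mul, Real.abs_exp]
    have h1 : |g x| * |h x| ≤ Cg * C :=
      mul_le_mul (gbdd x) (hbdd x) (abs_nonneg _) hCg
    have h2 : Real.exp (v * h x) ≤ Real.exp ((|v₀| + 1) * C) := by
      refine Real.exp_le_exp.2 ?_
      have hv' : |v| ≤ |v₀| + 1 := by
        have := abs_sub_abs_le_abs_sub v v₀
        have hv2 : |v - v₀| < 1 := by simpa [Real.dist_eq] using hv
        linarith
      calc v * h x ≤ |v| * |h x| := (le_abs_self _).trans (abs_mul _ _).le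
      _ ≤ (|v₀| + 1) * C :=
        mul_le_mul hv' (hbdd x) (abs_nonneg _) (by positivity)
    exact mul_le_mul h1 h2 (Real.exp_pos _).le (by positivity)
  · refine Filter.Eventually.of_forall fun x v _ => ?_
    have hd : HasDerivAt (fun v : ℝ => v * h x) (h x) v := hasDerivAt_mul_const _
    have := (hd.exp).const_mul (g x)
    convert this using 1
    · rfl
    ring

private lemma aux_pos {d : ℕ} (p : Measure (Fin d → ℝ)) [IsProbabilityMeasure p]
    (h : (Fin d → ℝ) → ℝ) (hmeas : Measurable h) (C : ℝ) (hbdd : ∀ x, |h x| ≤ C)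
    (v : ℝ) : 0 < ∫ x, Real.exp (v * h x) ∂p := by
  have habs : ∀ x, |v * h x| ≤ |v| * C := fun x => by
    rw [abs_mul]; exact mul_le_mul_of_nonneg_left (hbdd x) (abs_nonneg v)
  have hint : Integrable (fun x => Real.exp (v * h x)) p := by
    refine aux_integrable p _ ((measurable_const.mul hmeas).exp) (Real.exp (|v| * C))
      fun x => ?_
    rw [Real.abs_exp]
    exact Real.exp_le_exp.2 ((le_abs_self _).trans (habs x))
  have hle : Real.exp (-(|v| * C)) ≤ ∫ x, Real.exp (v * h x) ∂p := by
    calc Real.exp (-(|v| * C)) = ∫ _x, Real.exp (-(|v| * C)) ∂p := by simp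
    _ ≤ _ := integral_mono (integrable_const _) hint fun x =>
        Real.exp_le_exp.2 (by linarith [neg_abs_le (v * h x), habs x])
  linarith [Real.exp_pos (-(|v| * C))]

/-- Association-probability likelihood-ratio functions: for every
`m, j ∈ {1,…,M}`, the second partial derivative of `E^m = N_m / D` with respect
to the coordinate `z_j` (twice) at `(0,0)` equals
`(1 - β^m) ĥ₂ - 2 β^m (1 - β^m) ĥ²` if `j = m` and `2 (β^j)² ĥ² - β^j ĥ₂`
otherwise, where `ĥ = ∫ h dp` and `ĥ₂ = ∫ h² dp`. -/
theorem stmt_12 (d M : ℕ) (p : Measure (Fin d → ℝ)) [IsProbabilityMeasure p]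
    (h : (Fin d → ℝ) → ℝ) (hmeas : Measurable h) (C : ℝ) (hbdd : ∀ x, |h x| ≤ C)
    (β0 : ℝ) (β : Fin M → ℝ)
    (hβ0 : 0 ≤ β0 ∧ β0 ≤ 1) (hβ : ∀ m, 0 ≤ β m ∧ β m ≤ 1)
    (hsum : β0 + ∑ m, β m = 1)
    (N : Fin M → ℝ × (Fin M → ℝ) → ℝ)
    (hN : ∀ l tz, N l tz = ∫ x, Real.exp (h x * tz.2 l - (h x) ^ 2 * tz.1 / 2) ∂p)
    (D : ℝ × (Fin M → ℝ) → ℝ)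
    (hD : ∀ tz, D tz = (∑ l, β l * N l tz) + β0)
    (E : Fin M → ℝ × (Fin M → ℝ) → ℝ)
    (hE : ∀ m tz, E m tz = N m tz / D tz) :
    ∀ m j : Fin M,
      deriv (fun w =>
          deriv (fun v => E m (0, Function.update (0 : Fin M → ℝ) j v)) w) 0
        = if j = m then
            (1 - β m) * (∫ x, (h x) ^ 2 ∂p)
              - 2 * β m * (1 - β m) * (∫ x, h x ∂p) ^ 2
          else
            2 * (β j) ^ 2 * (∫ x, h x ∂p) ^ 2 - β j * ∫ x, (h x) ^ 2 ∂p := by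
  intro m j
  set F : ℝ → ℝ := fun v => ∫ x, Real.exp (v * h x) ∂p with hFdef
  set G : ℝ → ℝ := fun v => ∫ x, h x * Real.exp (v * h x) ∂p with hGdef
  set Hf : ℝ → ℝ := fun v => ∫ x, (h x * h x) * Real.exp (v * h x) ∂p with hHdef
  set a : ℝ := β j with hadef
  -- derivatives of F and G
  have hFd : ∀ v, HasDerivAt F (G v) v := by
    intro v
    have := aux_hasDeriv p h (fun _ => (1 : ℝ)) hmeas measurable_const C 1 hbdd
      (fun x => by norm_num) v
    rw [hFdef, hGdef]
    simpa using this
  have hGd : ∀ v, HasDerivAt G (Hf v) v := by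
    intro v
    have := aux_hasDeriv p h h hmeas hmeas C C hbdd hbdd v
    rw [hGdef, hHdef]
    simpa using this
  have hFpos : ∀ v, 0 < F v := fun v => aux_pos p h hmeas C hbdd v
  -- values at 0
  have hF0 : F 0 = 1 := by rw [hFdef]; simp
  have hG0 : G 0 = ∫ x, h x ∂p := by rw [hGdef]; simp
  have hH0 : Hf 0 = ∫ x, (h x) ^ 2 ∂p := by
    rw [hHdef]; simp [pow_two]
  -- denominator function
  have hDpos : ∀ v, 0 < a * F v + (1 - a) := by
    intro v
    rcases lt_or_eq_of_le (hβ j).2 with h1 | h1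
    · nlinarith [mul_nonneg (hβ j).1 (hFpos v).le]
    · nlinarith [hFpos v]
  have hDd : ∀ v, HasDerivAt (fun v => a * F v + (1 - a)) (a * G v) v := fun v =>
    ((hFd v).const_mul a).add_const _
  have hD0 : a * F 0 + (1 - a) = 1 := by rw [hF0]; ring
  -- identify the inner function
  have hinner : (fun v => E m (0, Function.update (0 : Fin M → ℝ) j v))
      = fun v => (if j = m then F v else 1) / (a * F v + (1 - a)) := by
    funext v
    have hNl : ∀ l, N l (0, Function.update (0 : Fin M → ℝ) j v)
        = if l = j then F v else 1 := by
      intro l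
      rw [hN]
      by_cases hl : l = j
      · subst hl
        simp [Function.update_self, hFdef, mul_comm]
      · rw [if_neg hl]
        simp [Function.update_of_ne hl]
    have hDv : D (0, Function.update (0 : Fin M → ℝ) j v) = a * F v + (1 - a) := by
      rw [hD]
      have hsplit : (∑ l, β l * N l (0, Function.update (0 : Fin M → ℝ) j v))
          = β j * F v + ∑ l ∈ Finset.univ.erase j, β l := by
        rw [← Finset.add_sum_erase _ _ (Finset.mem_univ j), hNl j, if_pos rfl]
        congr 1
        refine Finset.sum_congr rfl fun l hl => ?_
        rw [hNl l, if_neg (Finset.ne_of_mem_erase hl), mul_one]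
      rw [hsplit, Finset.sum_erase_eq_sub (Finset.mem_univ j)]
      have : ∑ l, β l = 1 - β0 := by linarith
      rw [this, hadef]
      ring
    rw [hE, hDv, hNl m]
    by_cases hjm : j = m
    · rw [if_pos hjm.symm, if_pos hjm]
    · rw [if_neg (fun hc => hjm hc.symm), if_neg hjm]
  by_cases hjm : j = m
  · have hinner2 : (fun v => E m (0, Function.update (0 : Fin M → ℝ) j v))
        = fun v => F v / (a * F v + (1 - a)) := by
      rw [hinner]; funext v; rw [if_pos hjm]
    rw [hinner2, if_pos hjm, ← hjm]
    -- first derivative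
    have hstep1 : (deriv fun v => F v / (a * F v + (1 - a)))
        = fun v => (G v * (a * F v + (1 - a)) - F v * (a * G v))
            / (a * F v + (1 - a)) ^ 2 := by
      funext w
      exact ((hFd w).div (hDd w) (hDpos w).ne').deriv
    rw [hstep1]
    -- second derivative
    have hNum : HasDerivAt
        (fun v => G v * (a * F v + (1 - a)) - F v * (a * G v))
        (Hf 0 * (a * F 0 + (1 - a)) + G 0 * (a * G 0)
          - (G 0 * (a * G 0) + F 0 * (a * Hf 0))) 0 :=
      ((hGd 0).mul (hDd 0)).sub ((hFd 0).mul ((hGd 0).const_mul a))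
    have hDen : HasDerivAt (fun v => (a * F v + (1 - a)) ^ 2)
        ((2 : ℕ) * (a * F 0 + (1 - a)) ^ 1 * (a * G 0)) 0 := (hDd 0).pow 2
    have hfin := hNum.div hDen (pow_ne_zero 2 (hDpos 0).ne')
    simp only [Pi.div_def] at hfin
    rw [hfin.deriv, hD0, hF0, hG0, hH0]
    push_cast
    ring
  · have hinner2 : (fun v => E m (0, Function.update (0 : Fin M → ℝ) j v))
        = fun v => 1 / (a * F v + (1 - a)) := by
      rw [hinner]; funext v; rw [if_neg hjm]
    rw [hinner2, if_neg hjm]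
    have hstep1 : (deriv fun v => (1 : ℝ) / (a * F v + (1 - a)))
        = fun v => (0 * (a * F v + (1 - a)) - 1 * (a * G v))
            / (a * F v + (1 - a)) ^ 2 := by
      funext w
      exact ((hasDerivAt_const w (1 : ℝ)).div (hDd w) (hDpos w).ne').deriv
    rw [hstep1]
    have hNum : HasDerivAt
        (fun v => 0 * (a * F v + (1 - a)) - 1 * (a * G v))
        (0 * (a * G 0) - 1 * (a * Hf 0)) 0 :=
      ((hDd 0).const_mul 0).sub (((hGd 0).const_mul a).const_mul 1)
    have hDen : HasDerivAt (fun v => (a * F v + (1 - a)) ^ 2)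
        ((2 : ℕ) * (a * F 0 + (1 - a)) ^ 1 * (a * G 0)) 0 := (hDd 0).pow 2
    have hfin := hNum.div hDen (pow_ne_zero 2 (hDpos 0).ne')
    simp only [Pi.div_def] at hfin
    rw [hfin.deriv, hD0, hG0, hH0]
    push_cast
    ring
end
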